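/- For g(S) = sum of the min(h,|S|) largest values of w on S, the marginal gain of adding e ∉ S to a set S with |S| ≥ h equals max(w(e) − τ_h(S), 0), where τ_h(S) is the h-th largest value of w on S. -/

import Mathlib

open Finset

/-- Sum of the `k` largest elements of a finite multiset of reals
(all elements if fewer than `k`). -/
noncomputable def topSum (k : ℕ) (M : Multiset ℝ) : ℝ :=
  ((M.sort (· ≥ ·)).take k).sum

/-- Single-category top-`h` sum of weights `w` over a finite set `S`. -/
noncomputable def topSet {I : Type*} (w : I → ℝ) (h : ℕ) (S : Finset I) : ℝ :=
  topSum h (S.val.map w)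

/-- The `h`-th largest value of `w` on `S` (meaningful when `h ≤ S.card`). -/
noncomputable def kthLargest {I : Type*} (w : I → ℝ) (h : ℕ) (S : Finset I) : ℝ :=
  ((S.val.map w).sort (· ≥ ·)).getD (h - 1) 0
lemma key : ∀ (L : List ℝ), L.Pairwise (· ≥ ·) → ∀ (h : ℕ), 1 ≤ h → h ≤ L.length → ∀ a : ℝ,
    ((List.orderedInsert (· ≥ ·) a L).take h).sum
      = (L.take h).sum + max (a - L.getD (h-1) 0) 0 := by
  intro L
  induction L with
  | nil => intro _ h h1 h2; simp at h2; omega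
  | cons b t ih =>
    intro hs h h1 h2 a
    obtain ⟨m, rfl⟩ : ∃ m, h = m + 1 := ⟨h - 1, by omega⟩
    rw [List.orderedInsert]
    by_cases hab : a ≥ b
    · rw [if_pos hab]
      -- take (m+1) (a :: b :: t) = a :: take m (b::t)
      have hm : m < (b :: t).length := h2
      have hd : (b :: t).getD m 0 = (b :: t)[m] := List.getD_eq_getElem _ _ hm
      have hba : b ≥ (b :: t)[m] := by
        rcases Nat.eq_zero_or_pos m with h0 | h0
        · subst h0; simp
        · exact List.pairwise_iff_get.mp hs ⟨0, by simp⟩ ⟨m, hm⟩ h0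
      have hsum : ((b :: t).take (m+1)).sum = ((b :: t).take m).sum + (b :: t)[m] :=
        List.sum_take_succ _ _ hm
      have hmax : max (a - (b :: t).getD m 0) 0 = a - (b :: t)[m] := by
        rw [hd]; exact max_eq_left (by linarith)
      rw [Nat.add_sub_cancel, List.take_succ_cons, List.sum_cons, hsum, hmax]
      ring
    · rw [if_neg hab]
      rcases Nat.eq_zero_or_pos m with h0 | h0
      · subst h0
        simp only [List.take_cons, List.take_zero, List.sum_cons, List.sum_nil, List.getD]
        have : max (a - b) 0 = 0 := max_eq_right (by push_neg at hab; linarith)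
        simp [this]
      · have ht : t.Pairwise (· ≥ ·) := hs.of_cons
        have := ih ht m h0 (by simpa using h2) a
        rw [Nat.add_sub_cancel, List.take_succ_cons, List.take_succ_cons,
          List.sum_cons, List.sum_cons]
        have hget : (b :: t).getD m 0 = t.getD (m-1) 0 := by
          obtain ⟨p, rfl⟩ : ∃ p, m = p + 1 := ⟨m - 1, by omega⟩
          simp [List.getD_cons_succ]
        rw [this, hget]; ring


lemma sort_cons_eq (a : ℝ) (M : Multiset ℝ) :
    (a ::ₘ M).sort (· ≥ ·) = List.orderedInsert (· ≥ ·) a (M.sort (· ≥ ·)) := by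
  refine List.Perm.eq_of_pairwise' (Multiset.pairwise_sort _ _)
    ((Multiset.pairwise_sort M _).orderedInsert a _) ?_
  refine (Multiset.coe_eq_coe.mp ?_).trans (List.perm_orderedInsert _ a _).symm
  rw [← Multiset.cons_coe, Multiset.sort_eq]
  rw [Multiset.sort_eq]

theorem top_h_marginal_gain {I : Type*} [Fintype I] [DecidableEq I]
    (w : I → ℝ) (hw : ∀ v, 0 ≤ w v) (h : ℕ) (hh : 1 ≤ h)
    (S : Finset I) (hS : h ≤ S.card) (e : I) (he : e ∉ S) :
    topSet w h (insert e S) - topSet w h S = max (w e - kthLargest w h S) 0 := by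
  unfold topSet topSum kthLargest
  rw [Finset.insert_val_of_notMem he, Multiset.map_cons, sort_cons_eq,
    key _ (Multiset.pairwise_sort _ _) h hh (by rw [Multiset.length_sort]; simpa using hS)]
  ring
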